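/- Let (A,H,D) be a p-summable spectral triple with D invertible, i.e. [D,a] is bounded for all a ∈ A and (1+D²)^{-p/2} is trace class. Then with F = sign D, the commutator [F,a] lies in the Schatten class L^p(H) for every a ∈ A. -/

import Mathlib

open ContinuousLinearMap Filter
open scoped InnerProductSpace
open MeasureTheory Set Topology
set_option maxHeartbeats 1000000

/-- The `m`-th singular value (approximation number) of an operator `T` on a Hilbert space:
the distance of `T` to the operators of rank at most `m`.  For a compact operator this is the
`m`-th eigenvalue of `|T|` in decreasing order. -/
noncomputable def sv {H : Type*} [NormedAddCommGroup H] [InnerProductSpace ℂ H]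
    (T : H →L[ℂ] H) (m : ℕ) : ℝ :=
  ⨅ F : {F : H →L[ℂ] H // FiniteDimensional ℂ (LinearMap.range (F : H →ₗ[ℂ] H)) ∧
          Module.finrank ℂ (LinearMap.range (F : H →ₗ[ℂ] H)) ≤ m}, ‖T - F.1‖




lemma integral_exp_rate (k : ℝ) (hk : 0 < k) :
    ∫ s in Ioi (0:ℝ), Real.exp (-k*s) = k⁻¹ := by
  have := MeasureTheory.integral_comp_mul_left_Ioi (fun x => Real.exp (-x)) 0 hk
  simp only [mul_zero] at this
  simp only [neg_mul]
  rw [show (fun s : ℝ => Real.exp (-(k*s))) = (fun s : ℝ => Real.exp (-(k*s))) from rfl, this,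
    integral_exp_neg_Ioi_zero]
  simp

lemma integrable_exp_rate (k : ℝ) (hk : 0 < k) :
    IntegrableOn (fun s => Real.exp (-k*s)) (Ioi (0:ℝ)) :=
  exp_neg_integrableOn_Ioi 0 hk

lemma integrable_exp_rate_C (k : ℝ) (hk : 0 < k) (z : ℂ) :
    IntegrableOn (fun s => z * ((Real.exp (-k*s) : ℝ) : ℂ)) (Ioi (0:ℝ)) :=
  ((integrable_exp_rate k hk).ofReal).const_mul z

lemma integral_exp_rate_C (k : ℝ) (hk : 0 < k) (z : ℂ) :
    ∫ s in Ioi (0:ℝ), z * ((Real.exp (-k*s) : ℝ) : ℂ) = z * ((k⁻¹ : ℝ) : ℂ) := by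
  rw [MeasureTheory.integral_const_mul]
  congr 1
  have : ∫ s in Ioi (0:ℝ), ((Real.exp (-k*s) : ℝ) : ℂ) = ((∫ s in Ioi (0:ℝ), Real.exp (-k*s) : ℝ) : ℂ) :=
    integral_ofReal
  rw [this, integral_exp_rate k hk]

section aux3
variable {H : Type*} [NormedAddCommGroup H] [InnerProductSpace ℂ H] [CompleteSpace H]

lemma norm_ortho_sum (b : HilbertBasis ℕ ℂ H) (A : Finset ℕ) (l : ℕ → ℂ) :
    ‖∑ m ∈ A, l m • b m‖ = Real.sqrt (∑ m ∈ A, ‖l m‖^2) := by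
  have h := b.orthonormal.inner_sum l l A
  have h2 : ⟪∑ m ∈ A, l m • b m, ∑ m ∈ A, l m • b m⟫_ℂ = ((∑ m ∈ A, ‖l m‖^2 : ℝ) : ℂ) := by
    rw [h]
    push_cast
    refine Finset.sum_congr rfl fun m _ => ?_
    rw [mul_comm, Complex.mul_conj]
    norm_cast
    rw [Complex.normSq_eq_norm_sq]
  rw [norm_eq_sqrt_re_inner (𝕜 := ℂ), h2]
  norm_cast

lemma block_bound (b : HilbertBasis ℕ ℂ H) (c : H →L[ℂ] H) (lam : ℕ → ℝ)
    (R : ℝ) (hR : 0 < R) (A B : Finset ℕ) (x y : ℕ → ℂ) (t : ℕ → ℕ → ℂ)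
    (hlamA : ∀ m ∈ A, R ≤ lam m) (hlamB : ∀ n ∈ B, R ≤ lam n)
    (ht : ∀ m ∈ A, ∀ n ∈ B, t m n
        = (((lam m + lam n)⁻¹ : ℝ) : ℂ) * (2 * ⟪c (b m), b n⟫_ℂ)) :
    ‖∑ m ∈ A, ∑ n ∈ B, (starRingEnd ℂ) (x m) * y n * t m n‖
      ≤ ‖c‖ / R * Real.sqrt (∑ m ∈ A, ‖x m‖^2) * Real.sqrt (∑ n ∈ B, ‖y n‖^2) := by
  set X := Real.sqrt (∑ m ∈ A, ‖x m‖^2) with hX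
  set Y := Real.sqrt (∑ n ∈ B, ‖y n‖^2) with hY
  have hX0 : 0 ≤ X := Real.sqrt_nonneg _
  have hY0 : 0 ≤ Y := Real.sqrt_nonneg _
  have hlampos : ∀ m ∈ A, 0 < lam m := fun m hm => lt_of_lt_of_le hR (hlamA m hm)
  have hlamposB : ∀ n ∈ B, 0 < lam n := fun n hn => lt_of_lt_of_le hR (hlamB n hn)
  set u : ℝ → H := fun s => ∑ m ∈ A, (x m * ((Real.exp (-(lam m) * s) : ℝ) : ℂ)) • b m with hu
  set v : ℝ → H := fun s => ∑ n ∈ B, (y n * ((Real.exp (-(lam n) * s) : ℝ) : ℂ)) • b n with hv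
  set φ : ℝ → ℂ := fun s => 2 * ⟪c (u s), v s⟫_ℂ with hφ
  have hφeq : ∀ s : ℝ, φ s = ∑ m ∈ A, ∑ n ∈ B,
      ((starRingEnd ℂ) (x m) * y n * (2 * ⟪c (b m), b n⟫_ℂ))
        * ((Real.exp (-(lam m + lam n) * s) : ℝ) : ℂ) := by
    intro s
    show 2 * ⟪c (u s), v s⟫_ℂ = _
    have hc : c (u s) = ∑ m ∈ A, (x m * ((Real.exp (-(lam m) * s) : ℝ) : ℂ)) • c (b m) := by
      rw [hu]; simp only [map_sum, _root_.map_smul]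
    rw [hc, hv]
    simp only [sum_inner, inner_smul_left, inner_sum, inner_smul_right, Finset.mul_sum,
      Finset.sum_mul, map_mul, Complex.conj_ofReal]
    rw [Finset.sum_comm]
    refine Finset.sum_congr rfl fun m hm => Finset.sum_congr rfl fun n hn => ?_
    have hee : Real.exp (-(lam m + lam n) * s)
        = Real.exp (-(lam m) * s) * Real.exp (-(lam n) * s) := by
      rw [← Real.exp_add]; congr 1; ring
    rw [hee]
    push_cast
    ring
  have hint : ∑ m ∈ A, ∑ n ∈ B, (starRingEnd ℂ) (x m) * y n * t m n
      = ∫ s in Ioi (0:ℝ), φ s := by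
    have hcong : ∀ s ∈ Ioi (0:ℝ), φ s = ∑ m ∈ A, ∑ n ∈ B,
        ((starRingEnd ℂ) (x m) * y n * (2 * ⟪c (b m), b n⟫_ℂ))
          * ((Real.exp (-(lam m + lam n) * s) : ℝ) : ℂ) := fun s _ => hφeq s
    rw [MeasureTheory.setIntegral_congr_fun measurableSet_Ioi hcong,
      MeasureTheory.integral_finset_sum A (fun m hm =>
        integrable_finset_sum B (fun n hn => integrable_exp_rate_C _
          (by have := hlampos m hm; have h2 := hlamposB n hn; linarith) _))]
    refine Finset.sum_congr rfl fun m hm => ?_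
    rw [MeasureTheory.integral_finset_sum B (fun n hn => integrable_exp_rate_C _
      (by have := hlampos m hm; have h2 := hlamposB n hn; linarith) _)]
    refine Finset.sum_congr rfl fun n hn => ?_
    rw [integral_exp_rate_C _ (by have := hlampos m hm; have h2 := hlamposB n hn; linarith),
      ht m hm n hn]
    ring
  have hmaj : ∀ s ∈ Ioi (0:ℝ), ‖φ s‖ ≤ (2*‖c‖*X*Y) * Real.exp (-(2*R) * s) := by
    intro s hs
    have hs0 : (0:ℝ) ≤ s := le_of_lt hs
    have hnu : ‖u s‖ ≤ Real.exp (-R*s) * X := by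
      rw [hu, norm_ortho_sum b A _]
      have hsle : ∑ m ∈ A, ‖x m * ((Real.exp (-(lam m) * s) : ℝ) : ℂ)‖^2
          ≤ (Real.exp (-R*s))^2 * ∑ m ∈ A, ‖x m‖^2 := by
        rw [Finset.mul_sum]
        refine Finset.sum_le_sum fun m hm => ?_
        rw [norm_mul, Complex.norm_real, mul_pow, Real.norm_eq_abs,
          abs_of_pos (Real.exp_pos _)]
        have he : Real.exp (-(lam m) * s) ≤ Real.exp (-R*s) := by
          apply Real.exp_le_exp.2
          have := hlamA m hm
          nlinarith
        have he2 : (Real.exp (-(lam m) * s))^2 ≤ (Real.exp (-R*s))^2 := by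
          nlinarith [Real.exp_pos (-(lam m) * s)]
        nlinarith [sq_nonneg (‖x m‖)]
      calc Real.sqrt (∑ m ∈ A, ‖x m * ((Real.exp (-(lam m) * s) : ℝ) : ℂ)‖^2)
          ≤ Real.sqrt ((Real.exp (-R*s))^2 * ∑ m ∈ A, ‖x m‖^2) := Real.sqrt_le_sqrt hsle
        _ = Real.exp (-R*s) * X := by
            rw [Real.sqrt_mul (sq_nonneg _), Real.sqrt_sq (Real.exp_pos _).le, hX]
    have hnv : ‖v s‖ ≤ Real.exp (-R*s) * Y := by
      rw [hv, norm_ortho_sum b B _]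
      have hsle : ∑ n ∈ B, ‖y n * ((Real.exp (-(lam n) * s) : ℝ) : ℂ)‖^2
          ≤ (Real.exp (-R*s))^2 * ∑ n ∈ B, ‖y n‖^2 := by
        rw [Finset.mul_sum]
        refine Finset.sum_le_sum fun n hn => ?_
        rw [norm_mul, Complex.norm_real, mul_pow, Real.norm_eq_abs,
          abs_of_pos (Real.exp_pos _)]
        have he : Real.exp (-(lam n) * s) ≤ Real.exp (-R*s) := by
          apply Real.exp_le_exp.2
          have := hlamB n hn
          nlinarith
        have he2 : (Real.exp (-(lam n) * s))^2 ≤ (Real.exp (-R*s))^2 := by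
          nlinarith [Real.exp_pos (-(lam n) * s)]
        nlinarith [sq_nonneg (‖y n‖)]
      calc Real.sqrt (∑ n ∈ B, ‖y n * ((Real.exp (-(lam n) * s) : ℝ) : ℂ)‖^2)
          ≤ Real.sqrt ((Real.exp (-R*s))^2 * ∑ n ∈ B, ‖y n‖^2) := Real.sqrt_le_sqrt hsle
        _ = Real.exp (-R*s) * Y := by
            rw [Real.sqrt_mul (sq_nonneg _), Real.sqrt_sq (Real.exp_pos _).le, hY]
    have h1 : ‖φ s‖ = 2 * ‖⟪c (u s), v s⟫_ℂ‖ := by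
      rw [hφ]; simp [norm_mul]
    have h2 : ‖⟪c (u s), v s⟫_ℂ‖ ≤ ‖c‖ * ‖u s‖ * ‖v s‖ := by
      refine le_trans (norm_inner_le_norm _ _) ?_
      have h3 := c.le_opNorm (u s)
      have h4 : ‖c (u s)‖ * ‖v s‖ ≤ (‖c‖ * ‖u s‖) * ‖v s‖ :=
        mul_le_mul_of_nonneg_right h3 (norm_nonneg _)
      linarith
    have hexp : Real.exp (-R*s) * Real.exp (-R*s) = Real.exp (-(2*R)*s) := by
      rw [← Real.exp_add]; congr 1; ring
    have hthis : ‖c‖ * ‖u s‖ * ‖v s‖ ≤ ‖c‖ * ((Real.exp (-R*s) * X) * (Real.exp (-R*s) * Y)) := by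
      have huv : ‖u s‖ * ‖v s‖ ≤ (Real.exp (-R*s) * X) * (Real.exp (-R*s) * Y) :=
        mul_le_mul hnu hnv (norm_nonneg _) (by positivity)
      calc ‖c‖ * ‖u s‖ * ‖v s‖ = ‖c‖ * (‖u s‖ * ‖v s‖) := by ring
        _ ≤ _ := mul_le_mul_of_nonneg_left huv (norm_nonneg _)
    rw [h1]
    calc 2 * ‖⟪c (u s), v s⟫_ℂ‖
        ≤ 2 * (‖c‖ * ((Real.exp (-R*s) * X) * (Real.exp (-R*s) * Y))) := by
          linarith [le_trans h2 hthis]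
      _ = (2*‖c‖*X*Y) * Real.exp (-(2*R)*s) := by rw [← hexp]; ring
  have hmajint : IntegrableOn (fun s => (2*‖c‖*X*Y) * Real.exp (-(2*R) * s)) (Ioi (0:ℝ)) :=
    (integrable_exp_rate (2*R) (by linarith)).const_mul _
  calc ‖∑ m ∈ A, ∑ n ∈ B, (starRingEnd ℂ) (x m) * y n * t m n‖
      = ‖∫ s in Ioi (0:ℝ), φ s‖ := by rw [hint]
    _ ≤ ∫ s in Ioi (0:ℝ), (2*‖c‖*X*Y) * Real.exp (-(2*R) * s) := by
        refine MeasureTheory.norm_integral_le_of_norm_le hmajint ?_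
        exact (MeasureTheory.ae_restrict_iff' measurableSet_Ioi).2 (Eventually.of_forall hmaj)
    _ = (2*‖c‖*X*Y) * (2*R)⁻¹ := by
        rw [MeasureTheory.integral_const_mul, integral_exp_rate (2*R) (by linarith)]
    _ = ‖c‖ / R * X * Y := by field_simp
end aux3

section aux
variable {H : Type*} [NormedAddCommGroup H] [InnerProductSpace ℂ H] [CompleteSpace H]

lemma inner_basis_self (b : HilbertBasis ℕ ℂ H) (n : ℕ) : ⟪b n, b n⟫_ℂ = 1 := by
  have := b.orthonormal.1 n
  rw [@inner_self_eq_norm_sq_to_K ℂ, this]; norm_num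

lemma F_inner (b : HilbertBasis ℕ ℂ H) (d : ℕ → ℝ) (F : H →L[ℂ] H)
    (hF : ∀ n, F (b n) = (Real.sign (d n) : ℂ) • b n) (n : ℕ) (x : H) :
    ⟪b n, F x⟫_ℂ = (Real.sign (d n) : ℂ) * ⟪b n, x⟫_ℂ := by
  have h1 : HasSum (fun i => F (b.repr x i • b i)) (F x) := (b.hasSum_repr x).mapL F
  have h2 : HasSum (fun i => (innerSL ℂ (b n)) (F (b.repr x i • b i))) (⟪b n, F x⟫_ℂ) :=
    h1.mapL (innerSL ℂ (b n))
  have h3 : ∀ i, i ≠ n → (innerSL ℂ (b n)) (F (b.repr x i • b i)) = 0 := by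
    intro i hi
    simp only [innerSL_apply_apply, _root_.map_smul, hF i, inner_smul_right, smul_eq_mul,
      b.orthonormal.2 (Ne.symm hi)]
    ring
  have h4 := (hasSum_single (f := fun i => (innerSL ℂ (b n)) (F (b.repr x i • b i))) n
    (fun i hi => h3 i hi)).unique h2
  rw [← h4]
  simp only [innerSL_apply_apply, _root_.map_smul, hF n, inner_smul_right, smul_eq_mul,
    inner_basis_self b n, b.repr_apply_apply]
  ring
end aux

section aux2
variable {H : Type*} [NormedAddCommGroup H] [InnerProductSpace ℂ H] [CompleteSpace H]

lemma T_inner (b : HilbertBasis ℕ ℂ H) (d : ℕ → ℝ) (F : H →L[ℂ] H)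
    (hF : ∀ n, F (b n) = (Real.sign (d n) : ℂ) • b n) (a : H →L[ℂ] H) (m n : ℕ) :
    ⟪(F * a - a * F) (b m), b n⟫_ℂ
      = ((Real.sign (d n) - Real.sign (d m) : ℝ) : ℂ) * ⟪a (b m), b n⟫_ℂ := by
  have e1 : ⟪F (a (b m)), b n⟫_ℂ = (Real.sign (d n) : ℂ) * ⟪a (b m), b n⟫_ℂ := by
    rw [← inner_conj_symm, F_inner b d F hF n (a (b m)), map_mul, inner_conj_symm]
    simp [Complex.conj_ofReal]
  have e2 : ⟪a (F (b m)), b n⟫_ℂ = (Real.sign (d m) : ℂ) * ⟪a (b m), b n⟫_ℂ := by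
    rw [hF m, ContinuousLinearMap.map_smul, inner_smul_left]
    simp [Complex.conj_ofReal]
  simp only [ContinuousLinearMap.sub_apply, ContinuousLinearMap.mul_apply, inner_sub_left, e1, e2]
  push_cast
  ring
end aux2


section aux4
variable {H : Type*} [NormedAddCommGroup H] [InnerProductSpace ℂ H] [CompleteSpace H]

lemma key_finite (b : HilbertBasis ℕ ℂ H) (d : ℕ → ℝ) (hd : ∀ n, d n ≠ 0)
    (c a F : H →L[ℂ] H)
    (hF : ∀ n, F (b n) = (Real.sign (d n) : ℂ) • b n)
    (hc : ∀ m n, ⟪c (b m), b n⟫_ℂ = ((d n - d m : ℝ) : ℂ) * ⟪a (b m), b n⟫_ℂ)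
    (R : ℝ) (hR : 0 < R) (A B : Finset ℕ) (x y : ℕ → ℂ)
    (hA : ∀ m ∈ A, R ≤ |d m|) (hB : ∀ n ∈ B, R ≤ |d n|) :
    ‖⟪(F*a - a*F) (∑ m ∈ A, x m • b m), ∑ n ∈ B, y n • b n⟫_ℂ‖
      ≤ 2*‖c‖/R * ‖∑ m ∈ A, x m • b m‖ * ‖∑ n ∈ B, y n • b n‖ := by
  classical
  set T := F*a - a*F with hT
  set f : ℕ → ℕ → ℂ := fun m n => (starRingEnd ℂ) (x m) * y n * ⟪T (b m), b n⟫_ℂ with hf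
  have hexpand : ⟪T (∑ m ∈ A, x m • b m), ∑ n ∈ B, y n • b n⟫_ℂ
      = ∑ m ∈ A, ∑ n ∈ B, f m n := by
    rw [map_sum]
    simp only [sum_inner, inner_sum, _root_.map_smul, inner_smul_left, inner_smul_right, hf,
      Finset.mul_sum, Finset.sum_mul]
    rw [Finset.sum_comm]
    refine Finset.sum_congr rfl fun m _ => Finset.sum_congr rfl fun n _ => ?_
    ring
  set Ap := A.filter (fun m => 0 < d m) with hAp
  set An := A.filter (fun m => ¬ 0 < d m) with hAn
  set Bp := B.filter (fun n => 0 < d n) with hBp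
  set Bn := B.filter (fun n => ¬ 0 < d n) with hBn
  have hsplitB : ∀ m, ∑ n ∈ B, f m n = ∑ n ∈ Bp, f m n + ∑ n ∈ Bn, f m n := fun m =>
    (Finset.sum_filter_add_sum_filter_not B _ _).symm
  have hsplit : ∑ m ∈ A, ∑ n ∈ B, f m n
      = (∑ m ∈ Ap, ∑ n ∈ Bp, f m n + ∑ m ∈ An, ∑ n ∈ Bp, f m n)
        + (∑ m ∈ Ap, ∑ n ∈ Bn, f m n + ∑ m ∈ An, ∑ n ∈ Bn, f m n) := by
    calc ∑ m ∈ A, ∑ n ∈ B, f m n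
        = ∑ m ∈ A, (∑ n ∈ Bp, f m n + ∑ n ∈ Bn, f m n) := Finset.sum_congr rfl fun m _ => hsplitB m
      _ = ∑ m ∈ A, ∑ n ∈ Bp, f m n + ∑ m ∈ A, ∑ n ∈ Bn, f m n := Finset.sum_add_distrib
      _ = _ := by
          rw [← Finset.sum_filter_add_sum_filter_not A (fun m => 0 < d m) (fun m => ∑ n ∈ Bp, f m n),
              ← Finset.sum_filter_add_sum_filter_not A (fun m => 0 < d m) (fun m => ∑ n ∈ Bn, f m n)]
  have hTmat : ∀ m n, ⟪T (b m), b n⟫_ℂ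
      = ((Real.sign (d n) - Real.sign (d m) : ℝ) : ℂ) * ⟪a (b m), b n⟫_ℂ :=
    fun m n => T_inner b d F hF a m n
  have hzero1 : ∑ m ∈ Ap, ∑ n ∈ Bp, f m n = 0 := by
    refine Finset.sum_eq_zero fun m hm => Finset.sum_eq_zero fun n hn => ?_
    have hm' : 0 < d m := (Finset.mem_filter.1 hm).2
    have hn' : 0 < d n := (Finset.mem_filter.1 hn).2
    rw [hf]
    simp only [hTmat, Real.sign_of_pos hm', Real.sign_of_pos hn']
    norm_num
  have hzero2 : ∑ m ∈ An, ∑ n ∈ Bn, f m n = 0 := by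
    refine Finset.sum_eq_zero fun m hm => Finset.sum_eq_zero fun n hn => ?_
    have hm' : d m < 0 := (le_of_not_gt (Finset.mem_filter.1 hm).2).lt_of_ne (hd m)
    have hn' : d n < 0 := (le_of_not_gt (Finset.mem_filter.1 hn).2).lt_of_ne (hd n)
    rw [hf]
    simp only [hTmat, Real.sign_of_neg hm', Real.sign_of_neg hn']
    norm_num
  have habs1 : ∀ m ∈ An, ∀ n ∈ Bp, ⟪T (b m), b n⟫_ℂ
      = (((|d m| + |d n|)⁻¹ : ℝ) : ℂ) * (2 * ⟪c (b m), b n⟫_ℂ) := by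
    intro m hm n hn
    have hm' : d m < 0 := (le_of_not_gt (Finset.mem_filter.1 hm).2).lt_of_ne (hd m)
    have hn' : 0 < d n := (Finset.mem_filter.1 hn).2
    have habs : |d m| + |d n| = d n - d m := by
      rw [abs_of_neg hm', abs_of_pos hn']; ring
    have hne : d n - d m ≠ 0 := by linarith
    have hneC : ((d n - d m : ℝ) : ℂ) ≠ 0 := by exact_mod_cast hne
    rw [hTmat, hc, Real.sign_of_neg hm', Real.sign_of_pos hn', habs]
    push_cast at hneC ⊢
    field_simp
    ring
  have habs2 : ∀ m ∈ Ap, ∀ n ∈ Bn, ⟪T (b m), b n⟫_ℂ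
      = (((|d m| + |d n|)⁻¹ : ℝ) : ℂ) * (2 * ⟪c (b m), b n⟫_ℂ) := by
    intro m hm n hn
    have hm' : 0 < d m := (Finset.mem_filter.1 hm).2
    have hn' : d n < 0 := (le_of_not_gt (Finset.mem_filter.1 hn).2).lt_of_ne (hd n)
    have habs : |d m| + |d n| = d m - d n := by
      rw [abs_of_pos hm', abs_of_neg hn']; ring
    have hne : d m - d n ≠ 0 := by linarith
    have hneC : ((d m - d n : ℝ) : ℂ) ≠ 0 := by exact_mod_cast hne
    have hcast : ((d n - d m : ℝ) : ℂ) = -((d m - d n : ℝ) : ℂ) := by push_cast; ring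
    rw [hTmat, hc, Real.sign_of_pos hm', Real.sign_of_neg hn', habs, hcast]
    push_cast at hneC ⊢
    field_simp
    ring
  have h1 : ‖∑ m ∈ An, ∑ n ∈ Bp, f m n‖
      ≤ ‖c‖/R * Real.sqrt (∑ m ∈ An, ‖x m‖^2) * Real.sqrt (∑ n ∈ Bp, ‖y n‖^2) :=
    block_bound b c (fun k => |d k|) R hR An Bp x y (fun m n => ⟪T (b m), b n⟫_ℂ)
      (fun m hm => hA m (Finset.filter_subset _ _ hm))
      (fun n hn => hB n (Finset.filter_subset _ _ hn)) habs1
  have h2 : ‖∑ m ∈ Ap, ∑ n ∈ Bn, f m n‖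
      ≤ ‖c‖/R * Real.sqrt (∑ m ∈ Ap, ‖x m‖^2) * Real.sqrt (∑ n ∈ Bn, ‖y n‖^2) :=
    block_bound b c (fun k => |d k|) R hR Ap Bn x y (fun m n => ⟪T (b m), b n⟫_ℂ)
      (fun m hm => hA m (Finset.filter_subset _ _ hm))
      (fun n hn => hB n (Finset.filter_subset _ _ hn)) habs2
  have hXA : Real.sqrt (∑ m ∈ An, ‖x m‖^2) ≤ Real.sqrt (∑ m ∈ A, ‖x m‖^2) :=
    Real.sqrt_le_sqrt (Finset.sum_le_sum_of_subset_of_nonneg (Finset.filter_subset _ _)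
      (fun i _ _ => sq_nonneg _))
  have hXA' : Real.sqrt (∑ m ∈ Ap, ‖x m‖^2) ≤ Real.sqrt (∑ m ∈ A, ‖x m‖^2) :=
    Real.sqrt_le_sqrt (Finset.sum_le_sum_of_subset_of_nonneg (Finset.filter_subset _ _)
      (fun i _ _ => sq_nonneg _))
  have hYB : Real.sqrt (∑ n ∈ Bp, ‖y n‖^2) ≤ Real.sqrt (∑ n ∈ B, ‖y n‖^2) :=
    Real.sqrt_le_sqrt (Finset.sum_le_sum_of_subset_of_nonneg (Finset.filter_subset _ _)
      (fun i _ _ => sq_nonneg _))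
  have hYB' : Real.sqrt (∑ n ∈ Bn, ‖y n‖^2) ≤ Real.sqrt (∑ n ∈ B, ‖y n‖^2) :=
    Real.sqrt_le_sqrt (Finset.sum_le_sum_of_subset_of_nonneg (Finset.filter_subset _ _)
      (fun i _ _ => sq_nonneg _))
  have hcR : (0:ℝ) ≤ ‖c‖/R := by positivity
  rw [norm_ortho_sum b A x, norm_ortho_sum b B y]
  calc ‖⟪T (∑ m ∈ A, x m • b m), ∑ n ∈ B, y n • b n⟫_ℂ‖
      = ‖(∑ m ∈ An, ∑ n ∈ Bp, f m n) + (∑ m ∈ Ap, ∑ n ∈ Bn, f m n)‖ := by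
        rw [hexpand, hsplit, hzero1, hzero2, zero_add, add_zero]
    _ ≤ ‖∑ m ∈ An, ∑ n ∈ Bp, f m n‖ + ‖∑ m ∈ Ap, ∑ n ∈ Bn, f m n‖ := norm_add_le _ _
    _ ≤ ‖c‖/R * Real.sqrt (∑ m ∈ A, ‖x m‖^2) * Real.sqrt (∑ n ∈ B, ‖y n‖^2)
        + ‖c‖/R * Real.sqrt (∑ m ∈ A, ‖x m‖^2) * Real.sqrt (∑ n ∈ B, ‖y n‖^2) := by
        refine add_le_add (le_trans h1 ?_) (le_trans h2 ?_)
        · gcongr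
        · gcongr
    _ = 2*‖c‖/R * Real.sqrt (∑ m ∈ A, ‖x m‖^2) * Real.sqrt (∑ n ∈ B, ‖y n‖^2) := by ring
end aux4

section aux5
variable {H : Type*} [NormedAddCommGroup H] [InnerProductSpace ℂ H] [CompleteSpace H]

lemma sv_nonneg' (T : H →L[ℂ] H) (m : ℕ) : 0 ≤ sv T m :=
  Real.iInf_nonneg (fun _ => norm_nonneg _)

lemma sv_le' (T G : H →L[ℂ] H) (m : ℕ) (h1 : FiniteDimensional ℂ (LinearMap.range (G : H →ₗ[ℂ] H)))
    (h2 : Module.finrank ℂ (LinearMap.range (G : H →ₗ[ℂ] H)) ≤ m) : sv T m ≤ ‖T - G‖ := by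
  have hb : BddBelow (Set.range fun F : {F : H →L[ℂ] H // FiniteDimensional ℂ (LinearMap.range (F : H →ₗ[ℂ] H)) ∧
          Module.finrank ℂ (LinearMap.range (F : H →ₗ[ℂ] H)) ≤ m} => ‖T - F.1‖) :=
    ⟨0, by rintro y ⟨F, rfl⟩; exact norm_nonneg _⟩
  exact ciInf_le hb ⟨G, h1, h2⟩

lemma sv_bound (b : HilbertBasis ℕ ℂ H) (d : ℕ → ℝ) (hd : ∀ n, d n ≠ 0)
    (c a F : H →L[ℂ] H)
    (hF : ∀ n, F (b n) = (Real.sign (d n) : ℂ) • b n)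
    (hc : ∀ m n, ⟪c (b m), b n⟫_ℂ = ((d n - d m : ℝ) : ℂ) * ⟪a (b m), b n⟫_ℂ)
    (s : Finset ℕ) (R : ℝ) (hR : 0 < R) (hs : ∀ n, n ∉ s → R ≤ |d n|)
    (m : ℕ) (hm : 2 * s.card ≤ m) :
    sv (F * a - a * F) m ≤ 2 * ‖c‖ / R := by
  classical
  set T := F * a - a * F with hT
  set C := 2 * ‖c‖ / R with hC
  have hC0 : 0 ≤ C := by positivity
  set E : H →L[ℂ] H := ∑ n ∈ s, (innerSL ℂ (b n)).smulRight (b n) with hE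
  have hEapp : ∀ x, E x = ∑ n ∈ s, ⟪b n, x⟫_ℂ • b n := by
    intro x
    rw [hE]
    simp [ContinuousLinearMap.sum_apply]
  have e1 : ∀ k ∈ s, ∀ x, ⟪b k, E x⟫_ℂ = ⟪b k, x⟫_ℂ := by
    intro k hk x
    rw [hEapp, inner_sum]
    rw [Finset.sum_eq_single k (fun n _ hnk => by
      rw [inner_smul_right, b.orthonormal.2 (Ne.symm hnk)]; ring) (fun h => absurd hk h)]
    rw [inner_smul_right, inner_basis_self b k]
    ring
  have e2 : ∀ k, k ∉ s → ∀ x, ⟪b k, E x⟫_ℂ = 0 := by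
    intro k hk x
    rw [hEapp, inner_sum]
    refine Finset.sum_eq_zero fun n hn => ?_
    have : n ≠ k := fun h => hk (h ▸ hn)
    rw [inner_smul_right, b.orthonormal.2 (Ne.symm this)]
    ring
  have e3 : ∀ x z, ⟪E x, z⟫_ℂ = ⟪x, E z⟫_ℂ := by
    intro x z
    rw [hEapp, hEapp, sum_inner, inner_sum]
    refine Finset.sum_congr rfl fun n _ => ?_
    rw [inner_smul_left, inner_smul_right, ← inner_conj_symm x (b n)]
    ring
  have e6 : ∀ z, E (E z) = E z := by
    intro z
    exact (hEapp (E z)).trans ((Finset.sum_congr rfl fun n hn => by rw [e1 n hn]).trans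
      (hEapp z).symm)
  have e5 : ∀ x : H, ‖x - E x‖ ≤ ‖x‖ := by
    intro x
    have hortho : ⟪x - E x, E x⟫_ℂ = 0 := by
      rw [inner_sub_left, e3 x (E x), e6, sub_self]
    have hsq := norm_add_sq_eq_norm_sq_add_norm_sq_of_inner_eq_zero _ _ hortho
    rw [sub_add_cancel] at hsq
    have h1 : ‖x - E x‖^2 ≤ ‖x‖^2 := by nlinarith [sq_nonneg (‖E x‖)]
    rw [← Real.sqrt_sq (norm_nonneg (x - E x)), ← Real.sqrt_sq (norm_nonneg x)]
    exact Real.sqrt_le_sqrt h1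
  -- the bilinear estimate on vectors orthogonal to the b k, k ∈ s
  have bilinear : ∀ x' y' : H, (∀ k ∈ s, ⟪b k, x'⟫_ℂ = 0) → (∀ k ∈ s, ⟪b k, y'⟫_ℂ = 0) →
      ‖⟪T x', y'⟫_ℂ‖ ≤ C * ‖x'‖ * ‖y'‖ := by
    intro x' y' hx' hy'
    have htx : Tendsto (fun A : Finset ℕ => ∑ k ∈ A, b.repr x' k • b k) atTop (𝓝 x') :=
      b.hasSum_repr x'
    have hty : Tendsto (fun A : Finset ℕ => ∑ k ∈ A, b.repr y' k • b k) atTop (𝓝 y') :=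
      b.hasSum_repr y'
    have hcont : Tendsto (fun A : Finset ℕ =>
        ‖⟪T (∑ k ∈ A, b.repr x' k • b k), ∑ k ∈ A, b.repr y' k • b k⟫_ℂ‖) atTop
        (𝓝 ‖⟪T x', y'⟫_ℂ‖) :=
      (Filter.Tendsto.inner ((T.continuous.tendsto x').comp htx) hty).norm
    refine le_of_tendsto hcont (Filter.Eventually.of_forall fun A => ?_)
    have hxA : ∑ k ∈ A, b.repr x' k • b k = ∑ k ∈ A \ s, b.repr x' k • b k := by
      refine (Finset.sum_subset (Finset.sdiff_subset) fun k hk hk' => ?_).symm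
      have hks : k ∈ s := by
        by_contra hns
        exact hk' (Finset.mem_sdiff.2 ⟨hk, hns⟩)
      rw [b.repr_apply_apply, hx' k hks, zero_smul]
    have hyA : ∑ k ∈ A, b.repr y' k • b k = ∑ k ∈ A \ s, b.repr y' k • b k := by
      refine (Finset.sum_subset (Finset.sdiff_subset) fun k hk hk' => ?_).symm
      have hks : k ∈ s := by
        by_contra hns
        exact hk' (Finset.mem_sdiff.2 ⟨hk, hns⟩)
      rw [b.repr_apply_apply, hy' k hks, zero_smul]
    rw [hxA, hyA]
    have hkey := key_finite b d hd c a F hF hc R hR (A \ s) (A \ s)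
      (fun k => b.repr x' k) (fun k => b.repr y' k)
      (fun k hk => hs k (Finset.mem_sdiff.1 hk).2) (fun k hk => hs k (Finset.mem_sdiff.1 hk).2)
    refine le_trans hkey ?_
    have hnx : ‖∑ k ∈ A \ s, b.repr x' k • b k‖ ≤ ‖x'‖ := by
      rw [norm_ortho_sum]
      have hbessel : ∑ k ∈ A \ s, ‖(b.repr x') k‖^2 ≤ ‖x'‖^2 := by
        have := b.orthonormal.sum_inner_products_le (s := A \ s) x'
        simpa [b.repr_apply_apply] using this
      rw [← Real.sqrt_sq (norm_nonneg x')]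
      exact Real.sqrt_le_sqrt hbessel
    have hny : ‖∑ k ∈ A \ s, b.repr y' k • b k‖ ≤ ‖y'‖ := by
      rw [norm_ortho_sum]
      have hbessel : ∑ k ∈ A \ s, ‖(b.repr y') k‖^2 ≤ ‖y'‖^2 := by
        have := b.orthonormal.sum_inner_products_le (s := A \ s) y'
        simpa [b.repr_apply_apply] using this
      rw [← Real.sqrt_sq (norm_nonneg y')]
      exact Real.sqrt_le_sqrt hbessel
    exact mul_le_mul (mul_le_mul_of_nonneg_left hnx hC0) hny (norm_nonneg _) (by positivity)
  -- the finite-rank approximation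
  set G : H →L[ℂ] H := E.comp T + ((T - E.comp T).comp E) with hG
  have hTG : ∀ x : H, (T - G) x = (T - E.comp T) (x - E x) := by
    intro x
    simp only [hG, ContinuousLinearMap.sub_apply, ContinuousLinearMap.add_apply,
      ContinuousLinearMap.comp_apply, map_sub]
    abel
  have hGx : ∀ x : H, ‖(T - G) x‖ ≤ C * ‖x‖ := by
    intro x
    set x' := x - E x with hx'
    set w := (T - E.comp T) x' with hw
    have hwv : w = T x' - E (T x') := by
      rw [hw]; simp [ContinuousLinearMap.sub_apply, ContinuousLinearMap.comp_apply]
    have hx's : ∀ k ∈ s, ⟪b k, x'⟫_ℂ = 0 := by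
      intro k hk
      rw [hx', inner_sub_right, e1 k hk, sub_self]
    have hws : ∀ k ∈ s, ⟪b k, w⟫_ℂ = 0 := by
      intro k hk
      rw [hwv, inner_sub_right, e1 k hk, sub_self]
    have hEw : E w = 0 := by
      rw [hwv, map_sub, e6, sub_self]
    have hiww : ⟪w, w⟫_ℂ = ⟪T x', w⟫_ℂ := by
      have h0 : ⟪E (T x'), w⟫_ℂ = 0 := by rw [e3, hEw, inner_zero_right]
      have h1 : ⟪w, w⟫_ℂ = ⟪T x' - E (T x'), w⟫_ℂ := congrArg (fun z => ⟪z, w⟫_ℂ) hwv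
      rw [h1, inner_sub_left, h0, sub_zero]
    have hnormsq : (‖w‖:ℝ)^2 = ‖⟪T x', w⟫_ℂ‖ := by
      rw [← hiww, @inner_self_eq_norm_sq_to_K ℂ]
      rw [norm_pow, RCLike.norm_ofReal, abs_norm]
    have hble := bilinear x' w hx's hws
    have hxx : ‖x'‖ ≤ ‖x‖ := e5 x
    have hwle : ‖w‖^2 ≤ C * ‖x‖ * ‖w‖ := by
      rw [hnormsq]
      exact le_trans hble (mul_le_mul_of_nonneg_right
        (mul_le_mul_of_nonneg_left hxx hC0) (norm_nonneg _))
    have := hTG x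
    rw [this, ← hw]
    rcases eq_or_lt_of_le (norm_nonneg w) with h0 | h0
    · rw [← h0]; positivity
    · nlinarith
  -- rank of G
  set t : Finset H := s.image (fun n => (b n : H)) ∪ s.image (fun n => (T - E.comp T) (b n)) with htdef
  have htcard : t.card ≤ 2 * s.card := by
    refine le_trans (Finset.card_union_le _ _) ?_
    have h1 := Finset.card_image_le (s := s) (f := fun n => (b n : H))
    have h2 := Finset.card_image_le (s := s) (f := fun n => (T - E.comp T) (b n))
    omega
  set W : Submodule ℂ H := Submodule.span ℂ (t : Set H) with hW
  have hWfd : FiniteDimensional ℂ W := FiniteDimensional.span_of_finite ℂ (t.finite_toSet)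
  have hrange : LinearMap.range (G : H →ₗ[ℂ] H) ≤ W := by
    rintro _ ⟨x, rfl⟩
    have hGx2 : G x = E (T x) + (T - E.comp T) (E x) := by
      rw [hG]; simp [ContinuousLinearMap.add_apply, ContinuousLinearMap.comp_apply]
    rw [ContinuousLinearMap.coe_coe, hGx2]
    refine Submodule.add_mem _ ?_ ?_
    · rw [hEapp]
      refine Submodule.sum_mem _ fun n hn => Submodule.smul_mem _ _ (Submodule.subset_span ?_)
      simp only [htdef, Finset.coe_union, Set.mem_union, Finset.coe_image, Set.mem_image]
      exact Or.inl ⟨n, hn, rfl⟩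
    · rw [hEapp, map_sum]
      refine Submodule.sum_mem _ fun n hn => ?_
      rw [_root_.map_smul]
      refine Submodule.smul_mem _ _ (Submodule.subset_span ?_)
      simp only [htdef, Finset.coe_union, Set.mem_union, Finset.coe_image, Set.mem_image]
      exact Or.inr ⟨n, hn, rfl⟩
  have hfd : FiniteDimensional ℂ (LinearMap.range (G : H →ₗ[ℂ] H)) :=
    Submodule.finiteDimensional_of_le hrange
  have hfr : Module.finrank ℂ (LinearMap.range (G : H →ₗ[ℂ] H)) ≤ m := by
    refine le_trans (Submodule.finrank_mono hrange) (le_trans ?_ hm)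
    exact le_trans (finrank_span_finset_le_card t) htcard
  refine le_trans (sv_le' T G m hfd hfr) ?_
  refine ContinuousLinearMap.opNorm_le_bound _ hC0 ?_
  exact hGx
end aux5

lemma pern (p δ cn lam Rj : ℝ) (hp : 0 < p) (hδ : 0 < δ) (hcn : 0 ≤ cn)
    (hld : δ ≤ lam) (hRpos : 0 < Rj) (hlR : lam < 2 * Rj) :
    (2 * cn / Rj) ^ p ≤ (4 * cn) ^ p * (1 + (δ⁻¹)^2) ^ (p/2) * (1 + lam^2) ^ (-(p/2)) := by
  have hlpos : 0 < lam := lt_of_lt_of_le hδ hld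
  set K' := (1 + (δ⁻¹)^2) ^ (p/2) with hK'
  have hK'0 : 0 < K' := Real.rpow_pos_of_pos (by positivity) _
  have step1 : 2 * cn / Rj ≤ 4 * cn / lam := by
    rw [div_le_div_iff₀ hRpos hlpos]
    nlinarith
  have step2 : (2 * cn / Rj) ^ p ≤ (4 * cn / lam) ^ p :=
    Real.rpow_le_rpow (by positivity) step1 hp.le
  have step3 : (4 * cn / lam) ^ p = (4 * cn) ^ p * (lam ^ p)⁻¹ := by
    rw [Real.div_rpow (by positivity) hlpos.le, div_eq_mul_inv]
  have hlp : 0 < lam ^ p := Real.rpow_pos_of_pos hlpos p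
  set t := (1 + lam^2) ^ (p/2) with htdef
  have htpos : 0 < t := Real.rpow_pos_of_pos (by positivity) _
  have h1 : 1 + lam^2 ≤ (1 + (δ⁻¹)^2) * lam^2 := by
    have h0 : 1 ≤ δ⁻¹ * lam := by
      rw [inv_mul_eq_div, le_div_iff₀ hδ]
      linarith
    have key : 1 ≤ (δ⁻¹)^2 * lam^2 := by nlinarith
    nlinarith
  have hsq : (lam^2 : ℝ) ^ (p/2) = lam ^ p := by
    rw [← Real.rpow_natCast lam 2, ← Real.rpow_mul hlpos.le]
    norm_num
    rw [show (2:ℝ) * (p/2) = p by ring]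
  have h5 : t ≤ K' * lam ^ p := by
    calc t ≤ ((1 + (δ⁻¹)^2) * lam^2) ^ (p/2) :=
          Real.rpow_le_rpow (by positivity) h1 (by positivity)
      _ = K' * (lam^2) ^ (p/2) := Real.mul_rpow (by positivity) (by positivity)
      _ = K' * lam ^ p := by rw [hsq]
  have hinv : (lam ^ p)⁻¹ ≤ K' * t⁻¹ := by
    have h6 : t * (lam ^ p)⁻¹ ≤ K' := by
      have h7 := mul_le_mul_of_nonneg_right h5 (inv_pos.2 hlp).le
      calc t * (lam ^ p)⁻¹ ≤ (K' * lam ^ p) * (lam ^ p)⁻¹ := h7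
        _ = K' := by field_simp
    calc (lam ^ p)⁻¹ = (t * (lam ^ p)⁻¹) * t⁻¹ := by field_simp
      _ ≤ K' * t⁻¹ := mul_le_mul_of_nonneg_right h6 (inv_pos.2 htpos).le
  calc (2 * cn / Rj) ^ p ≤ (4 * cn) ^ p * (lam ^ p)⁻¹ := by rw [← step3]; exact step2
    _ ≤ (4 * cn) ^ p * (K' * t⁻¹) :=
        mul_le_mul_of_nonneg_left hinv (Real.rpow_nonneg (by positivity) _)
    _ = (4 * cn) ^ p * K' * (1 + lam^2) ^ (-(p/2)) := by
        rw [Real.rpow_neg (by positivity), ← htdef]; ring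


/-- Let `(A,H,D)` be a `p`-summable spectral triple with `D` invertible.
Here the self-adjoint operator `D` with compact resolvent is encoded by a Hilbert basis `b` of
eigenvectors with eigenvalues `d n ≠ 0`, `|d n| → ∞`; `p`-summability means
`∑ (1+d n²)^{-p/2} < ∞`; `F = sign D` acts by `F (b n) = sign (d n) • b n`; the commutator
`[D,a]` is bounded, i.e. there is a bounded operator `c` with matrix elements
`⟪c bₘ, bₙ⟫ = (dₙ - dₘ)⟪a bₘ, bₙ⟫`.  Then `[F,a]` belongs to the Schatten class `L^p(H)`. -/
theorem commutator_sign_in_schatten_class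
    {H : Type*} [NormedAddCommGroup H] [InnerProductSpace ℂ H] [CompleteSpace H]
    (p : ℝ) (hp : 1 < p)
    (b : HilbertBasis ℕ ℂ H) (d : ℕ → ℝ) (hd : ∀ n, d n ≠ 0)
    (hres : Tendsto (fun n => |d n|) atTop atTop)
    (hsum : Summable (fun n => ((1 + (d n) ^ 2) ^ (-(p / 2)) : ℝ)))
    (F : H →L[ℂ] H) (hF : ∀ n, F (b n) = (Real.sign (d n) : ℂ) • b n)
    (a : H →L[ℂ] H)
    (hcomm : ∃ c : H →L[ℂ] H, ∀ m n,
      ⟪c (b m), b n⟫_ℂ = ((d n - d m : ℝ) : ℂ) * ⟪a (b m), b n⟫_ℂ) :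
    Summable (fun m => sv (F * a - a * F) m ^ p) := by
  classical
  obtain ⟨c, hc⟩ := hcomm
  set T := F * a - a * F with hT
  have hp0 : 0 < p := lt_trans one_pos hp
  set wfun : ℕ → ℝ := fun n => ((1 + (d n) ^ 2) ^ (-(p / 2)) : ℝ) with hwfun
  have hwnn : ∀ n, 0 ≤ wfun n := fun n => Real.rpow_nonneg (by positivity) _
  -- uniform lower bound δ for |d n|
  obtain ⟨N, hN⟩ := Filter.eventually_atTop.1 (hres.eventually_ge_atTop 1)
  set μ := (Finset.range (N+1)).inf' ⟨0, Finset.mem_range.2 (Nat.succ_pos N)⟩ (fun n => |d n|)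
    with hμ
  set δ := min 1 μ with hδdef
  have hδ0 : 0 < δ := lt_min one_pos (Finset.lt_inf'_iff _ |>.2 fun i _ => abs_pos.2 (hd i))
  have hδle : ∀ n, δ ≤ |d n| := by
    intro n
    by_cases hn : n ≤ N
    · exact le_trans (min_le_right _ _)
        (Finset.inf'_le _ (Finset.mem_range.2 (by omega)))
    · exact le_trans (min_le_left _ _) (hN n (by omega))
  -- the shells
  have hfin : ∀ j : ℕ, {n : ℕ | |d n| < δ * 2^j}.Finite := by
    intro j
    obtain ⟨N', hN'⟩ := Filter.eventually_atTop.1 (hres.eventually_ge_atTop (δ * 2^j))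
    refine Set.Finite.subset (Set.finite_lt_nat N') ?_
    intro n hn
    simp only [Set.mem_setOf_eq] at hn ⊢
    by_contra hcon
    push_neg at hcon
    exact absurd (hN' n hcon) (not_le.2 hn)
  set sh : ℕ → Finset ℕ := fun j => (hfin j).toFinset with hsh
  set ν : ℕ → ℕ := fun j => (sh j).card with hν
  have hmem : ∀ j n, n ∈ sh j ↔ |d n| < δ * 2^j := by
    intro j n
    simp [hsh, Set.Finite.mem_toFinset]
  have hsh0 : sh 0 = ∅ := by
    refine Finset.eq_empty_of_forall_notMem fun n hn => ?_
    rw [hmem] at hn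
    simp only [pow_zero, mul_one] at hn
    exact absurd (hδle n) (not_le.2 hn)
  have hmono : ∀ j, sh j ⊆ sh (j+1) := by
    intro j n hn
    rw [hmem] at hn ⊢
    have : (2:ℝ)^j ≤ 2^(j+1) := by
      have := pow_le_pow_right₀ (by norm_num : (1:ℝ) ≤ 2) (Nat.le_succ j)
      exact this
    nlinarith
  have hR0 : ∀ j : ℕ, (0:ℝ) < δ * 2^j := fun j => by positivity
  have hsv : ∀ j m, 2 * ν j ≤ m → sv T m ≤ 2 * ‖c‖ / (δ * 2^j) := by
    intro j m hm
    refine sv_bound b d hd c a F hF hc (sh j) (δ * 2^j) (hR0 j) ?_ m hm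
    intro n hn
    by_contra hcon
    push_neg at hcon
    exact hn ((hmem j n).2 hcon)
  have hunbdd : ∀ M : ℕ, ∃ j, M ≤ ν j := by
    intro M
    rcases Nat.eq_zero_or_pos M with rfl | hM
    · exact ⟨0, Nat.zero_le _⟩
    have hne : (Finset.range M).Nonempty := ⟨0, Finset.mem_range.2 hM⟩
    set Bm := (Finset.range M).sup' hne (fun n => |d n|) with hBm
    obtain ⟨j, hj⟩ := pow_unbounded_of_one_lt (Bm / δ) (by norm_num : (1:ℝ) < 2)
    refine ⟨j, ?_⟩
    have hsub : Finset.range M ⊆ sh j := by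
      intro n hn
      rw [hmem]
      have h1 : |d n| ≤ Bm := Finset.le_sup' (fun n => |d n|) hn
      have h2 : Bm < δ * 2^j := by
        rw [div_lt_iff₀ hδ0] at hj
        calc Bm < 2^j * δ := hj
          _ = δ * 2^j := by ring
      linarith
    calc M = (Finset.range M).card := (Finset.card_range M).symm
      _ ≤ ν j := Finset.card_le_card hsub
  -- the fibering function
  have hQ : ∀ m : ℕ, ∃ j, m < 2 * ν j := by
    intro m
    obtain ⟨j, hj⟩ := hunbdd (m+1)
    exact ⟨j, by omega⟩
  set jf : ℕ → ℕ := fun m => Nat.find (hQ m) - 1 with hjf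
  have hfind_pos : ∀ m, 0 < Nat.find (hQ m) := by
    intro m
    rcases Nat.eq_zero_or_pos (Nat.find (hQ m)) with h0 | h0
    · have := Nat.find_spec (hQ m)
      rw [h0] at this
      have hν0 : ν 0 = 0 := by rw [hν]; simp [hsh0]
      omega
    · exact h0
  have hjfA : ∀ m, 2 * ν (jf m) ≤ m := by
    intro m
    have h1 : jf m < Nat.find (hQ m) := by
      have := hfind_pos m
      simp only [hjf]
      omega
    have := Nat.find_min (hQ m) h1
    omega
  have hjfB : ∀ m, m < 2 * ν (jf m + 1) := by
    intro m
    have h1 : jf m + 1 = Nat.find (hQ m) := by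
      have := hfind_pos m
      simp only [hjf]
      omega
    rw [h1]
    exact Nat.find_spec (hQ m)
  have hjflt : ∀ m J, m < 2 * ν J → jf m < J := by
    intro m J hmJ
    have h1 : Nat.find (hQ m) ≤ J := Nat.find_le hmJ
    have h2 := hfind_pos m
    have h3 : ν J ≠ 0 := by intro h; rw [h] at hmJ; omega
    have hJ0 : J ≠ 0 := by
      intro h
      rw [h] at hmJ
      have hν0 : ν 0 = 0 := by rw [hν]; simp [hsh0]
      omega
    simp only [hjf]
    omega
  -- constants
  set Kc : ℝ := (4 * ‖c‖) ^ p * (1 + (δ⁻¹)^2) ^ (p/2) with hKc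
  have hKc0 : 0 ≤ Kc := by positivity
  set W : ℝ := ∑' n, wfun n with hW
  have hsumW : ∀ (A : Finset ℕ), ∑ n ∈ A, wfun n ≤ W :=
    fun A => hsum.sum_le_tsum A (fun n _ => hwnn n)
  -- per-n bound
  have hpern : ∀ j n, n ∈ sh (j+1) \ sh j →
      (2 * ‖c‖ / (δ * 2^j)) ^ p ≤ Kc * wfun n := by
    intro j n hn
    obtain ⟨hn1, hn2⟩ := Finset.mem_sdiff.1 hn
    rw [hmem] at hn1
    have hn2' : δ * 2^j ≤ |d n| := by
      by_contra hcon
      push_neg at hcon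
      exact hn2 ((hmem j n).2 hcon)
    have h2R : |d n| < 2 * (δ * 2^j) := by
      have : δ * 2^(j+1) = 2 * (δ * 2^j) := by ring
      rw [← this]
      exact hn1
    have := pern p δ ‖c‖ (|d n|) (δ * 2^j) hp0 hδ0 (norm_nonneg c) (hδle n) (hR0 j) h2R
    calc (2 * ‖c‖ / (δ * 2^j)) ^ p
        ≤ (4 * ‖c‖) ^ p * (1 + (δ⁻¹)^2) ^ (p/2) * (1 + |d n|^2) ^ (-(p/2)) := this
      _ = Kc * wfun n := by rw [hKc, hwfun]; rw [sq_abs]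
  -- telescoping
  have htel : ∀ J : ℕ, ∑ j ∈ Finset.range J, ∑ n ∈ sh (j+1) \ sh j, wfun n
      = ∑ n ∈ sh J, wfun n := by
    intro J
    induction J with
    | zero => simp [hsh0]
    | succ J ih =>
        rw [Finset.sum_range_succ, ih, Finset.sum_sdiff_eq_sub (hmono J)]
        ring
  -- partial sums bound
  refine summable_of_sum_range_le (c := 2 * Kc * W)
    (fun m => Real.rpow_nonneg (sv_nonneg' T m) p) ?_
  intro M
  obtain ⟨J, hJ⟩ := hunbdd M
  have hMJ : M ≤ 2 * ν J := by omega
  have hmaps : ∀ m ∈ Finset.range M, jf m ∈ Finset.range J := by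
    intro m hm
    rw [Finset.mem_range] at hm ⊢
    exact hjflt m J (by omega)
  have hstep1 : ∑ m ∈ Finset.range M, sv T m ^ p
      ≤ ∑ m ∈ Finset.range M, (2 * ‖c‖ / (δ * 2^(jf m))) ^ p := by
    refine Finset.sum_le_sum fun m _ => ?_
    exact Real.rpow_le_rpow (sv_nonneg' T m) (hsv (jf m) m (hjfA m)) hp0.le
  have hstep2 : ∑ m ∈ Finset.range M, (2 * ‖c‖ / (δ * 2^(jf m))) ^ p
      = ∑ j ∈ Finset.range J, ∑ m ∈ (Finset.range M).filter (fun m => jf m = j),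
          (2 * ‖c‖ / (δ * 2^(jf m))) ^ p :=
    (Finset.sum_fiberwise_of_maps_to hmaps _).symm
  have hstep3 : ∀ j, ∑ m ∈ (Finset.range M).filter (fun m => jf m = j),
      (2 * ‖c‖ / (δ * 2^(jf m))) ^ p
      ≤ 2 * ∑ n ∈ sh (j+1) \ sh j, Kc * wfun n := by
    intro j
    have hBj0 : (0:ℝ) ≤ (2 * ‖c‖ / (δ * 2^j)) ^ p := Real.rpow_nonneg (by positivity) _
    have hcardfib : ((Finset.range M).filter (fun m => jf m = j)).card
        ≤ 2 * (sh (j+1) \ sh j).card := by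
      have hsubfib : (Finset.range M).filter (fun m => jf m = j)
          ⊆ Finset.Ico (2 * ν j) (2 * ν (j+1)) := by
        intro m hm
        obtain ⟨_, hjm⟩ := Finset.mem_filter.1 hm
        rw [Finset.mem_Ico]
        constructor
        · have := hjfA m; rw [hjm] at this; exact this
        · have := hjfB m; rw [hjm] at this; exact this
      have h1 := Finset.card_le_card hsubfib
      rw [Nat.card_Ico] at h1
      have h2 : (sh (j+1) \ sh j).card = ν (j+1) - ν j :=
        Finset.card_sdiff_of_subset (hmono j)
      have h3 : ν j ≤ ν (j+1) := Finset.card_le_card (hmono j)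
      omega
    calc ∑ m ∈ (Finset.range M).filter (fun m => jf m = j),
          (2 * ‖c‖ / (δ * 2^(jf m))) ^ p
        = ∑ m ∈ (Finset.range M).filter (fun m => jf m = j),
          (2 * ‖c‖ / (δ * 2^j)) ^ p := by
          refine Finset.sum_congr rfl fun m hm => ?_
          rw [(Finset.mem_filter.1 hm).2]
      _ = ((Finset.range M).filter (fun m => jf m = j)).card
            * (2 * ‖c‖ / (δ * 2^j)) ^ p := by
          rw [Finset.sum_const, nsmul_eq_mul]
      _ ≤ (2 * (sh (j+1) \ sh j).card) * (2 * ‖c‖ / (δ * 2^j)) ^ p := by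
          refine mul_le_mul_of_nonneg_right ?_ hBj0
          exact_mod_cast hcardfib
      _ = 2 * ∑ n ∈ sh (j+1) \ sh j, (2 * ‖c‖ / (δ * 2^j)) ^ p := by
          rw [Finset.sum_const, nsmul_eq_mul]
          ring
      _ ≤ 2 * ∑ n ∈ sh (j+1) \ sh j, Kc * wfun n := by
          refine mul_le_mul_of_nonneg_left (Finset.sum_le_sum fun n hn => hpern j n hn)
            (by norm_num)
  calc ∑ m ∈ Finset.range M, sv T m ^ p
      ≤ ∑ j ∈ Finset.range J, ∑ m ∈ (Finset.range M).filter (fun m => jf m = j),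
          (2 * ‖c‖ / (δ * 2^(jf m))) ^ p := by rw [← hstep2]; exact hstep1
    _ ≤ ∑ j ∈ Finset.range J, 2 * ∑ n ∈ sh (j+1) \ sh j, Kc * wfun n :=
        Finset.sum_le_sum fun j _ => hstep3 j
    _ = ∑ j ∈ Finset.range J, 2 * Kc * ∑ n ∈ sh (j+1) \ sh j, wfun n := by
        refine Finset.sum_congr rfl fun j _ => ?_
        rw [← Finset.mul_sum, ← mul_assoc]
    _ = 2 * Kc * ∑ j ∈ Finset.range J, ∑ n ∈ sh (j+1) \ sh j, wfun n := by
        rw [← Finset.mul_sum]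
    _ = 2 * Kc * ∑ n ∈ sh J, wfun n := by rw [htel J]
    _ ≤ 2 * Kc * W := by
        refine mul_le_mul_of_nonneg_left (hsumW (sh J)) (by positivity)
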